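/- Let M₀ and N₀ be d×d complex matrices with 0 ≤ M₀ ≤ 1_d and 0 ≤ N₀ ≤ 1_d, and suppose M₀ − N₀ = c·1_d for some nonzero real scalar c. Then the measurement channels Φ_M, Φ_N of the two-outcome POVMs {M₀, 1_d − M₀} and {N₀, 1_d − N₀} form a Maximal Entanglement Best Case pair: ‖Φ_M − Φ_N‖_ME = ‖Φ_M − Φ_N‖_⋄. In particular this holds for the commuting POVM elements M₀ = diag(9/10, 3/5) and N₀ = diag(1/2, 1/5) on ℂ². -/

import Mathlib

open Matrix Kronecker ComplexOrder

noncomputable section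

/-- The matrix absolute value `|A| = √(AᴴA)`. -/
noncomputable def matAbs {n : Type*} [Fintype n] [DecidableEq n] (A : Matrix n n ℂ) :
    Matrix n n ℂ :=
  (Matrix.posSemidef_conjTranspose_mul_self A).1.cfc Real.sqrt

/-- The trace norm `‖A‖₁ = Tr √(AᴴA)`. -/
noncomputable def traceNorm {n : Type*} [Fintype n] [DecidableEq n] (A : Matrix n n ℂ) : ℝ :=
  ((matAbs A).trace).re

/-- The positive semidefinite square root of a PSD matrix (zero otherwise). -/
noncomputable def matSqrt {n : Type*} [Fintype n] [DecidableEq n] (σ : Matrix n n ℂ) :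
    Matrix n n ℂ :=
  open scoped Classical in
  if h : σ.PosSemidef then h.1.cfc Real.sqrt else 0

/-- A density matrix: positive semidefinite with unit trace. -/
def IsDensity {n : Type*} [Fintype n] [DecidableEq n] (σ : Matrix n n ℂ) : Prop :=
  σ.PosSemidef ∧ σ.trace = 1

/-- The Choi operator of a linear map between matrix algebras. -/
noncomputable def choi {d m : ℕ}
    (S : Matrix (Fin d) (Fin d) ℂ →ₗ[ℂ] Matrix (Fin m) (Fin m) ℂ) :
    Matrix (Fin m × Fin d) (Fin m × Fin d) ℂ :=
  ∑ i : Fin d, ∑ j : Fin d,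
    (S (Matrix.single i j 1)) ⊗ₖ (Matrix.single i j 1)

/-- The ME-norm `‖S‖_ME = ‖J(S)‖₁ / d`. -/
noncomputable def MENorm {d m : ℕ}
    (S : Matrix (Fin d) (Fin d) ℂ →ₗ[ℂ] Matrix (Fin m) (Fin m) ℂ) : ℝ :=
  traceNorm (choi S) / d

/-- The diamond norm: supremum over density matrices σ of
`‖(1 ⊗ √σ) J(S) (1 ⊗ √σ)‖₁`. -/
noncomputable def diamondNorm {d m : ℕ}
    (S : Matrix (Fin d) (Fin d) ℂ →ₗ[ℂ] Matrix (Fin m) (Fin m) ℂ) : ℝ :=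
  ⨆ σ : {σ : Matrix (Fin d) (Fin d) ℂ // IsDensity σ},
    traceNorm (((1 : Matrix (Fin m) (Fin m) ℂ) ⊗ₖ matSqrt σ.1) * choi S *
      ((1 : Matrix (Fin m) (Fin m) ℂ) ⊗ₖ matSqrt σ.1))

/-- The M-operator `M(S) = Tr_B |J(S)|`. -/
noncomputable def Mop {d m : ℕ}
    (S : Matrix (Fin d) (Fin d) ℂ →ₗ[ℂ] Matrix (Fin m) (Fin m) ℂ) :
    Matrix (Fin d) (Fin d) ℂ :=
  Matrix.of fun k l => ∑ b : Fin m, matAbs (choi S) (b, k) (b, l)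

/-- A quantum channel: completely positive (PSD Choi operator, by Choi's theorem)
and trace preserving. -/
def IsQChannel {d m : ℕ}
    (S : Matrix (Fin d) (Fin d) ℂ →ₗ[ℂ] Matrix (Fin m) (Fin m) ℂ) : Prop :=
  (choi S).PosSemidef ∧ ∀ ρ : Matrix (Fin d) (Fin d) ℂ, (S ρ).trace = ρ.trace

/-- A POVM with `n` outcomes on `ℂ^d`. -/
def IsPOVM {d n : ℕ} (M : Fin n → Matrix (Fin d) (Fin d) ℂ) : Prop :=
  (∀ i, (M i).PosSemidef) ∧ ∑ i, M i = 1

/-- The measurement channel of a family of POVM elements: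
`Φ_M(ρ) = ∑ i, Tr(ρ M_i) |i⟩⟨i|`. -/
noncomputable def measChannel {d n : ℕ} (M : Fin n → Matrix (Fin d) (Fin d) ℂ) :
    Matrix (Fin d) (Fin d) ℂ →ₗ[ℂ] Matrix (Fin n) (Fin n) ℂ where
  toFun ρ := ∑ i, (ρ * M i).trace • Matrix.single i i (1 : ℂ)
  map_add' ρ σ := by
    simp [add_mul, Matrix.trace_add, add_smul, Finset.sum_add_distrib]
  map_smul' c ρ := by
    simp [Matrix.smul_mul, Matrix.trace_smul, smul_smul, Finset.smul_sum]

/-- The symmetric Werner-Holevo channel `Φ₊(ρ) = (Tr(ρ)·1 + ρᵀ)/(d+1)`. -/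
noncomputable def whPlus (d : ℕ) :
    Matrix (Fin d) (Fin d) ℂ →ₗ[ℂ] Matrix (Fin d) (Fin d) ℂ where
  toFun ρ := ((d : ℂ) + 1)⁻¹ • (ρ.trace • (1 : Matrix (Fin d) (Fin d) ℂ) + ρ.transpose)
  map_add' ρ σ := by
    simp [Matrix.trace_add, Matrix.transpose_add, add_smul, smul_add]
    module
  map_smul' c ρ := by
    simp [Matrix.trace_smul, Matrix.transpose_smul, smul_smul, smul_add]
    module

/-- The antisymmetric Werner-Holevo channel `Φ₋(ρ) = (Tr(ρ)·1 − ρᵀ)/(d−1)`. -/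
noncomputable def whMinus (d : ℕ) :
    Matrix (Fin d) (Fin d) ℂ →ₗ[ℂ] Matrix (Fin d) (Fin d) ℂ where
  toFun ρ := ((d : ℂ) - 1)⁻¹ • (ρ.trace • (1 : Matrix (Fin d) (Fin d) ℂ) - ρ.transpose)
  map_add' ρ σ := by
    simp [Matrix.trace_add, Matrix.transpose_add, add_smul]
    module
  map_smul' c ρ := by
    simp [Matrix.trace_smul, Matrix.transpose_smul, smul_smul]
    module

/-- The unitary (conjugation) channel `Φ_U(ρ) = U ρ Uᴴ`. -/
noncomputable def conjChannel {d : ℕ} (U : Matrix (Fin d) (Fin d) ℂ) :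
    Matrix (Fin d) (Fin d) ℂ →ₗ[ℂ] Matrix (Fin d) (Fin d) ℂ where
  toFun ρ := U * ρ * Uᴴ
  map_add' ρ σ := by simp [Matrix.mul_add, Matrix.add_mul]
  map_smul' c ρ := by simp [Matrix.mul_smul, Matrix.smul_mul]


section
open scoped MatrixOrder

/-- The PSD square root of a PSD matrix, via the Hermitian functional calculus. -/
noncomputable abbrev Matrix.PosSemidef.sqrt {n : Type*} [Fintype n] [DecidableEq n]
    {σ : Matrix n n ℂ} (h : σ.PosSemidef) : Matrix n n ℂ :=
  h.1.cfc Real.sqrt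

lemma Matrix.PosSemidef.sqrt_eq_cfcSqrt {n : Type*} [Fintype n] [DecidableEq n]
    {σ : Matrix n n ℂ} (h : σ.PosSemidef) : h.sqrt = CFC.sqrt σ := by
  rw [Matrix.PosSemidef.sqrt, ← h.1.cfc_eq, CFC.sqrt_eq_real_sqrt σ h.nonneg, cfcₙ_eq_cfc]

lemma Matrix.PosSemidef.posSemidef_sqrt {n : Type*} [Fintype n] [DecidableEq n]
    {σ : Matrix n n ℂ} (h : σ.PosSemidef) : h.sqrt.PosSemidef := by
  rw [h.sqrt_eq_cfcSqrt]
  exact Matrix.nonneg_iff_posSemidef.mp (CFC.sqrt_nonneg σ)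

lemma Matrix.PosSemidef.sqrt_mul_self {n : Type*} [Fintype n] [DecidableEq n]
    {σ : Matrix n n ℂ} (h : σ.PosSemidef) : h.sqrt * h.sqrt = σ := by
  rw [h.sqrt_eq_cfcSqrt]
  exact CFC.sqrt_mul_sqrt_self σ h.nonneg

lemma Matrix.PosSemidef.eq_sqrt_of_sq_eq {n : Type*} [Fintype n] [DecidableEq n]
    {A : Matrix n n ℂ} (hA : A.PosSemidef) (B : Matrix n n ℂ) (hAB : A ^ 2 = B)
    {hB : B.IsHermitian} : A = hB.cfc Real.sqrt := by
  have hB' : B.PosSemidef := by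
    rw [← hAB, pow_two]
    nth_rewrite 1 [← hA.1.eq]
    exact posSemidef_conjTranspose_mul_self A
  rw [show hB.cfc Real.sqrt = CFC.sqrt B from hB'.sqrt_eq_cfcSqrt]
  exact (CFC.sqrt_unique (by rw [← pow_two]; exact hAB) hA.nonneg).symm

end

lemma psd_real_smul {n : Type*} [Fintype n] [DecidableEq n] {A : Matrix n n ℂ}
    (hA : A.PosSemidef) {r : ℝ} (hr : 0 ≤ r) : ((r:ℂ) • A).PosSemidef := by
  refine ⟨?_, fun x => ?_⟩
  · unfold Matrix.IsHermitian
    rw [conjTranspose_smul, hA.1.eq]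
    congr 1
    simp [Complex.star_def, Complex.conj_ofReal]
  · exact (hA.smul (Complex.zero_le_real.2 hr)).2 x

lemma kron_conjTranspose {m n : Type*} [Fintype m] [Fintype n]
    (A : Matrix m m ℂ) (B : Matrix n n ℂ) : (A ⊗ₖ B)ᴴ = Aᴴ ⊗ₖ Bᴴ := by
  ext ⟨a, k⟩ ⟨b, l⟩
  simp [conjTranspose_apply, kroneckerMap_apply, mul_comm]

lemma psd_one_kron {m n : Type*} [Fintype m] [Fintype n] [DecidableEq m] [DecidableEq n]
    {σ : Matrix n n ℂ} (hσ : σ.PosSemidef) : ((1 : Matrix m m ℂ) ⊗ₖ σ).PosSemidef := by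
  have h : (1 : Matrix m m ℂ) ⊗ₖ σ
      = ((1 : Matrix m m ℂ) ⊗ₖ hσ.sqrt)ᴴ * ((1 : Matrix m m ℂ) ⊗ₖ hσ.sqrt) := by
    rw [kron_conjTranspose, conjTranspose_one, hσ.posSemidef_sqrt.1.eq,
      ← Matrix.mul_kronecker_mul, Matrix.one_mul, hσ.sqrt_mul_self]
  rw [h]
  exact Matrix.posSemidef_conjTranspose_mul_self _

/-- The matrix `E₀₀ - E₁₁` on `ℂ²`. -/
noncomputable def Dmat : Matrix (Fin 2) (Fin 2) ℂ :=
  Matrix.single 0 0 1 - Matrix.single 1 1 1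

lemma Dmat_herm : Dmatᴴ = Dmat := by
  ext i j
  fin_cases i <;> fin_cases j <;>
    simp [Dmat, Matrix.single, conjTranspose_apply]

lemma Dmat_mul_Dmat : Dmat * Dmat = 1 := by
  ext i j
  fin_cases i <;> fin_cases j <;>
    simp [Dmat, Matrix.mul_apply, Fin.sum_univ_two, Matrix.single, Matrix.one_apply]

lemma matAbs_smul_kron {dd : ℕ} (c : ℝ) {σ : Matrix (Fin dd) (Fin dd) ℂ} (hσ : σ.PosSemidef) :
    matAbs ((c:ℂ) • (Dmat ⊗ₖ σ))
      = ((|c| : ℝ) : ℂ) • ((1 : Matrix (Fin 2) (Fin 2) ℂ) ⊗ₖ σ) := by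
  have h0 : PosSemidef (((|c| : ℝ):ℂ) • ((1 : Matrix (Fin 2) (Fin 2) ℂ) ⊗ₖ σ)) :=
    psd_real_smul (psd_one_kron hσ) (abs_nonneg c)
  unfold matAbs
  refine (h0.eq_sqrt_of_sq_eq _ ?_).symm
  rw [pow_two, conjTranspose_smul, kron_conjTranspose, Dmat_herm, hσ.1.eq,
    Matrix.smul_mul, Matrix.mul_smul, Matrix.smul_mul, Matrix.mul_smul,
    ← Matrix.mul_kronecker_mul, ← Matrix.mul_kronecker_mul, Matrix.one_mul, Dmat_mul_Dmat,
    smul_smul, smul_smul]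
  congr 1
  simp [Complex.star_def, Complex.conj_ofReal, ← Complex.ofReal_mul, abs_mul_abs_self]

lemma tn_smul_kron {dd : ℕ} (c : ℝ) {σ : Matrix (Fin dd) (Fin dd) ℂ} (hσ : σ.PosSemidef) :
    traceNorm ((c:ℂ) • (Dmat ⊗ₖ σ)) = 2 * |c| * σ.trace.re := by
  rw [traceNorm, matAbs_smul_kron c hσ, trace_smul, Matrix.trace_kronecker, trace_one]
  simp [smul_eq_mul, Complex.mul_re]
  ring

lemma delta_apply {d : ℕ} (M₀ N₀ : Matrix (Fin d) (Fin d) ℂ) (c : ℝ)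
    (hMN : M₀ - N₀ = (c : ℂ) • (1 : Matrix (Fin d) (Fin d) ℂ))
    (ρ : Matrix (Fin d) (Fin d) ℂ) :
    (measChannel ![M₀, 1 - M₀] - measChannel ![N₀, 1 - N₀]) ρ
      = ((c:ℂ) * ρ.trace) • Dmat := by
  have h1 : (ρ * M₀).trace - (ρ * N₀).trace = (c:ℂ) * ρ.trace := by
    rw [← trace_sub, ← Matrix.mul_sub, hMN, Matrix.mul_smul, Matrix.mul_one, trace_smul,
      smul_eq_mul]
  have h2 : (ρ * (1 - M₀)).trace - (ρ * (1 - N₀)).trace = -((c:ℂ) * ρ.trace) := by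
    have hs : (1 - M₀) - (1 - N₀) = -(M₀ - N₀) := by abel
    rw [← trace_sub, ← Matrix.mul_sub, hs, hMN, Matrix.mul_neg, Matrix.mul_smul, Matrix.mul_one,
      trace_neg, trace_smul, smul_eq_mul]
  simp only [LinearMap.sub_apply, measChannel, LinearMap.coe_mk, AddHom.coe_mk,
    Fin.sum_univ_two, Matrix.cons_val_zero, Matrix.cons_val_one, Matrix.head_cons]
  rw [Dmat]
  calc (ρ * M₀).trace • Matrix.single (0 : Fin 2) (0 : Fin 2) (1:ℂ)
        + (ρ * (1 - M₀)).trace • Matrix.single 1 1 (1:ℂ)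
        - ((ρ * N₀).trace • Matrix.single 0 0 (1:ℂ)
          + (ρ * (1 - N₀)).trace • Matrix.single 1 1 (1:ℂ))
      = ((ρ * M₀).trace - (ρ * N₀).trace) • Matrix.single (0 : Fin 2) (0 : Fin 2) (1:ℂ)
        + ((ρ * (1 - M₀)).trace - (ρ * (1 - N₀)).trace) • Matrix.single 1 1 (1:ℂ) := by
        module
    _ = ((c:ℂ) * ρ.trace) • (Matrix.single 0 0 (1:ℂ) - Matrix.single 1 1 (1:ℂ)) := by
        rw [h1, h2]; module

lemma choi_delta {d : ℕ} (M₀ N₀ : Matrix (Fin d) (Fin d) ℂ) (c : ℝ)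
    (hMN : M₀ - N₀ = (c : ℂ) • (1 : Matrix (Fin d) (Fin d) ℂ)) :
    choi (measChannel ![M₀, 1 - M₀] - measChannel ![N₀, 1 - N₀])
      = (c:ℂ) • (Dmat ⊗ₖ (1 : Matrix (Fin d) (Fin d) ℂ)) := by
  have htr : ∀ i j : Fin d, (Matrix.single i j (1:ℂ)).trace
      = if i = j then 1 else 0 := by
    intro i j
    by_cases h : i = j
    · subst h; simp [Matrix.trace_single_eq_same]
    · rw [if_neg h]
      exact Matrix.trace_single_eq_of_ne (i := i) (j := j) (c := (1:ℂ)) h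
  have hterm : ∀ i j : Fin d,
      ((measChannel ![M₀, 1 - M₀] - measChannel ![N₀, 1 - N₀])
          (Matrix.single i j 1)) ⊗ₖ (Matrix.single i j (1:ℂ))
        = (if i = j then (c:ℂ) else 0) • (Dmat ⊗ₖ Matrix.single i j 1) := by
    intro i j
    rw [delta_apply M₀ N₀ c hMN, htr, Matrix.smul_kronecker]
    split <;> simp
  rw [choi]
  simp_rw [hterm, ite_smul, zero_smul, Finset.sum_ite_eq, Finset.mem_univ, if_pos]
  rw [← Finset.smul_sum]
  congr 1
  ext ⟨a, k⟩ ⟨b, l⟩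
  simp only [Matrix.sum_apply, kroneckerMap_apply, Matrix.single, Matrix.of_apply,
    Matrix.one_apply]
  by_cases hkl : k = l
  · subst hkl
    simp
  · rw [if_neg hkl, mul_zero]
    apply Finset.sum_eq_zero
    intro i _
    have : ¬(i = k ∧ i = l) := fun ⟨u, v⟩ => hkl (u ▸ v)
    simp [this]

lemma key {d : ℕ} (hd : 1 ≤ d) (M₀ N₀ : Matrix (Fin d) (Fin d) ℂ) (c : ℝ)
    (hMN : M₀ - N₀ = (c : ℂ) • (1 : Matrix (Fin d) (Fin d) ℂ)) :
    MENorm (measChannel ![M₀, 1 - M₀] - measChannel ![N₀, 1 - N₀]) = 2 * |c|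
    ∧ diamondNorm (measChannel ![M₀, 1 - M₀] - measChannel ![N₀, 1 - N₀]) = 2 * |c| := by
  have hchoi := choi_delta M₀ N₀ c hMN
  have hdne : (d:ℝ) ≠ 0 := by
    have : 0 < d := hd
    positivity
  constructor
  · rw [MENorm, hchoi, tn_smul_kron c Matrix.PosSemidef.one]
    have h1 : ((1 : Matrix (Fin d) (Fin d) ℂ).trace).re = d := by
      simp [Matrix.trace_one]
    rw [h1]
    field_simp
  · have hval : ∀ σ : {σ : Matrix (Fin d) (Fin d) ℂ // IsDensity σ},
        traceNorm (((1 : Matrix (Fin 2) (Fin 2) ℂ) ⊗ₖ matSqrt σ.1) *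
          choi (measChannel ![M₀, 1 - M₀] - measChannel ![N₀, 1 - N₀]) *
          ((1 : Matrix (Fin 2) (Fin 2) ℂ) ⊗ₖ matSqrt σ.1)) = 2 * |c| := by
      rintro ⟨σ, hσpsd, hσtr⟩
      rw [hchoi, matSqrt, dif_pos hσpsd]
      have hmul : ((1 : Matrix (Fin 2) (Fin 2) ℂ) ⊗ₖ hσpsd.sqrt) * ((c:ℂ) • (Dmat ⊗ₖ 1)) *
          ((1 : Matrix (Fin 2) (Fin 2) ℂ) ⊗ₖ hσpsd.sqrt) = (c:ℂ) • (Dmat ⊗ₖ σ) := by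
        rw [Matrix.mul_smul, Matrix.smul_mul, ← Matrix.mul_kronecker_mul,
          ← Matrix.mul_kronecker_mul, Matrix.one_mul, Matrix.mul_one, Matrix.mul_one,
          hσpsd.sqrt_mul_self]
      rw [hmul, tn_smul_kron c hσpsd, hσtr]
      simp
    haveI : Nonempty {σ : Matrix (Fin d) (Fin d) ℂ // IsDensity σ} := by
      refine ⟨⟨(((d:ℝ)⁻¹ : ℝ) : ℂ) • 1,
        psd_real_smul Matrix.PosSemidef.one (by positivity), ?_⟩⟩
      rw [trace_smul, Matrix.trace_one, Fintype.card_fin, smul_eq_mul]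
      push_cast
      field_simp
    rw [diamondNorm]
    rw [iSup_congr hval]
    exact ciSup_const

/-- if `M₀ − N₀ = c·1_d` with `c ≠ 0` real, the two-outcome
measurement channels form a MEBC pair: `‖Δ‖_ME = ‖Δ‖_⋄`. In particular this
holds for `M₀ = diag(9/10, 3/5)`, `N₀ = diag(1/2, 1/5)` on `ℂ²`. -/
theorem stmt13 {d : ℕ} (hd : 1 ≤ d) (M₀ N₀ : Matrix (Fin d) (Fin d) ℂ)
    (hM₀ : M₀.PosSemidef) (hM₁ : (1 - M₀).PosSemidef)
    (hN₀ : N₀.PosSemidef) (hN₁ : (1 - N₀).PosSemidef)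
    (c : ℝ) (hc : c ≠ 0) (hMN : M₀ - N₀ = (c : ℂ) • (1 : Matrix (Fin d) (Fin d) ℂ)) :
    MENorm (measChannel ![M₀, 1 - M₀] - measChannel ![N₀, 1 - N₀])
      = diamondNorm (measChannel ![M₀, 1 - M₀] - measChannel ![N₀, 1 - N₀])
    ∧ MENorm (measChannel ![Matrix.diagonal ![(9 : ℂ)/10, 3/5],
            1 - Matrix.diagonal ![(9 : ℂ)/10, 3/5]]
          - measChannel ![Matrix.diagonal ![(1 : ℂ)/2, 1/5],
            1 - Matrix.diagonal ![(1 : ℂ)/2, 1/5]])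
      = diamondNorm (measChannel ![Matrix.diagonal ![(9 : ℂ)/10, 3/5],
            1 - Matrix.diagonal ![(9 : ℂ)/10, 3/5]]
          - measChannel ![Matrix.diagonal ![(1 : ℂ)/2, 1/5],
            1 - Matrix.diagonal ![(1 : ℂ)/2, 1/5]]) := by
  constructor
  · obtain ⟨h1, h2⟩ := key hd M₀ N₀ c hMN
    rw [h1, h2]
  · have hMN2 : Matrix.diagonal ![(9:ℂ)/10, 3/5] - Matrix.diagonal ![(1:ℂ)/2, 1/5]
        = ((2/5 : ℝ) : ℂ) • (1 : Matrix (Fin 2) (Fin 2) ℂ) := by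
      ext i j
      fin_cases i <;> fin_cases j <;>
        simp [Matrix.diagonal, Matrix.one_apply] <;> norm_num
    obtain ⟨h1, h2⟩ := key (by norm_num) _ _ (2/5) hMN2
    rw [h1, h2]

end
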